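/- Let 0 < a < 1 and let H(v) = |v| − √(1−a²)·|P_{e₃⊥}v| (the support function of the spindle body on the region −a < v₃/|v| < a). For a unit vector u with −a < u₃ < a, the reverse Weingarten operator R(u) = ∇(DH)(u) restricted to u⊥ satisfies R(u)(e₃ − u₃u) = e₃ − u₃u and R(u)(u × e₃) = (1 − √(1−a²)/√(1−u₃²))·(u × e₃). In particular, R(u) has eigenvalues 1 and 1 − √(1−a²)/√(1−u₃²) ∈ (0,1). -/

import Mathlib

open Set Metric

noncomputable def vec3 (a b c : ℝ) : EuclideanSpace ℝ (Fin 3) :=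
  (WithLp.equiv 2 (Fin 3 → ℝ)).symm ![a, b, c]

noncomputable def Gfun (c : ℝ) (v : EuclideanSpace ℝ (Fin 3)) : EuclideanSpace ℝ (Fin 3) :=
  (Real.sqrt ((v 0)^2 + (v 1)^2 + (v 2)^2))⁻¹ • v
    - (c * (Real.sqrt ((v 0)^2 + (v 1)^2))⁻¹) •
        ((v 0) • EuclideanSpace.single (0 : Fin 3) (1:ℝ) + (v 1) • EuclideanSpace.single (1 : Fin 3) (1:ℝ))

lemma proj_hasFDerivAt (v : EuclideanSpace ℝ (Fin 3)) (i : Fin 3) :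
    HasFDerivAt (fun w : EuclideanSpace ℝ (Fin 3) => w i) (EuclideanSpace.proj (𝕜 := ℝ) i) v := by
  have h := ContinuousLinearMap.hasFDerivAt (𝕜 := ℝ) (x := v) (EuclideanSpace.proj (𝕜 := ℝ) i)
  have e : ⇑(EuclideanSpace.proj (𝕜 := ℝ) (ι := Fin 3) i) = fun w : EuclideanSpace ℝ (Fin 3) => w i := rfl
  rwa [e] at h

lemma proj_apply' (i : Fin 3) (w : EuclideanSpace ℝ (Fin 3)) :
    EuclideanSpace.proj (𝕜 := ℝ) i w = w i := rfl

open InnerProductSpace in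
lemma gradient_eq_Gfun (c : ℝ) (v : EuclideanSpace ℝ (Fin 3)) (hv : 0 < (v 0)^2 + (v 1)^2) :
    gradient (fun w : EuclideanSpace ℝ (Fin 3) => ‖w‖ - c * Real.sqrt ((w 0)^2 + (w 1)^2)) v
      = Gfun c v := by
  have hN : 0 < (v 0)^2 + (v 1)^2 + (v 2)^2 := by positivity
  have hQd := ((hasDerivAt_pow 2 (v 0)).comp_hasFDerivAt v (proj_hasFDerivAt v 0)).add
    ((hasDerivAt_pow 2 (v 1)).comp_hasFDerivAt v (proj_hasFDerivAt v 1))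
  have hNd := hQd.add ((hasDerivAt_pow 2 (v 2)).comp_hasFDerivAt v (proj_hasFDerivAt v 2))
  have hsN := (Real.hasDerivAt_sqrt hN.ne').comp_hasFDerivAt v hNd
  have hsQ := (Real.hasDerivAt_sqrt hv.ne').comp_hasFDerivAt v hQd
  have hD := hsN.sub (hsQ.const_mul c)
  simp only [Function.comp_def, Pi.add_def, Pi.sub_def] at hD
  have hfun : (fun w : EuclideanSpace ℝ (Fin 3) => ‖w‖ - c * Real.sqrt ((w 0)^2 + (w 1)^2))
      = fun w : EuclideanSpace ℝ (Fin 3) =>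
        Real.sqrt ((w 0)^2 + (w 1)^2 + (w 2)^2) - c * Real.sqrt ((w 0)^2 + (w 1)^2) := by
    funext w
    rw [EuclideanSpace.norm_eq]
    congr 2
    simp [Fin.sum_univ_three, sq_abs]
  rw [hfun, (hasFDerivAt_iff_hasGradientAt.mp hD).gradient]
  have hkey : toDual ℝ (EuclideanSpace ℝ (Fin 3)) (Gfun c v)
      = ((1 / (2 * Real.sqrt ((v 0)^2 + (v 1)^2 + (v 2)^2))) •
          (((2:ℕ) * v 0 ^ (2 - 1)) • EuclideanSpace.proj 0 + ((2:ℕ) * v 1 ^ (2 - 1)) • EuclideanSpace.proj 1 +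
            ((2:ℕ) * v 2 ^ (2 - 1)) • EuclideanSpace.proj 2) -
        c •
          (1 / (2 * Real.sqrt ((v 0)^2 + (v 1)^2))) •
            (((2:ℕ) * v 0 ^ (2 - 1)) • EuclideanSpace.proj 0 + ((2:ℕ) * v 1 ^ (2 - 1)) • EuclideanSpace.proj 1)) := ?_
  · rw [← hkey, LinearIsometryEquiv.symm_apply_apply]
  ext w
  simp [toDual_apply_apply, PiLp.inner_apply, Gfun, RCLike.inner_apply, starRingEnd_apply,
    star_trivial, Fin.sum_univ_three, PiLp.sub_apply, PiLp.add_apply, PiLp.smul_apply,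
    smul_eq_mul, EuclideanSpace.single_apply, ContinuousLinearMap.sub_apply,
    ContinuousLinearMap.add_apply, ContinuousLinearMap.smul_apply,
    ContinuousLinearMap.coe_smul', Pi.smul_apply, proj_apply']
  have h1 : Real.sqrt ((v 0)^2 + (v 1)^2 + (v 2)^2) ≠ 0 := (Real.sqrt_pos.2 hN).ne'
  have h2 : Real.sqrt ((v 0)^2 + (v 1)^2) ≠ 0 := (Real.sqrt_pos.2 hv).ne'
  field_simp

set_option maxHeartbeats 2000000 in
lemma fderiv_Gfun_apply (c : ℝ) (u : EuclideanSpace ℝ (Fin 3))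
    (h1 : (u 0)^2 + (u 1)^2 + (u 2)^2 = 1) (hq : 0 < (u 0)^2 + (u 1)^2)
    (w : EuclideanSpace ℝ (Fin 3)) :
    fderiv ℝ (Gfun c) u w
      = w - (u 0 * w 0 + u 1 * w 1 + u 2 * w 2) • u
        - (c / Real.sqrt ((u 0)^2 + (u 1)^2)) •
            (w 0 • EuclideanSpace.single (0 : Fin 3) (1:ℝ) + w 1 • EuclideanSpace.single (1 : Fin 3) (1:ℝ))
        + (c * (u 0 * w 0 + u 1 * w 1) / Real.sqrt ((u 0)^2 + (u 1)^2) ^ 3) •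
            (u 0 • EuclideanSpace.single (0 : Fin 3) (1:ℝ) + u 1 • EuclideanSpace.single (1 : Fin 3) (1:ℝ)) := by
  have hN : 0 < (u 0)^2 + (u 1)^2 + (u 2)^2 := by rw [h1]; norm_num
  have hQd := ((hasDerivAt_pow 2 (u 0)).comp_hasFDerivAt u (proj_hasFDerivAt u 0)).add
    ((hasDerivAt_pow 2 (u 1)).comp_hasFDerivAt u (proj_hasFDerivAt u 1))
  have hNd := hQd.add ((hasDerivAt_pow 2 (u 2)).comp_hasFDerivAt u (proj_hasFDerivAt u 2))
  have hinvN := ((Real.hasDerivAt_sqrt hN.ne').inv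
    (Real.sqrt_pos.2 hN).ne').comp_hasFDerivAt u hNd
  have hinvQ := ((Real.hasDerivAt_sqrt hq.ne').inv
    (Real.sqrt_pos.2 hq).ne').comp_hasFDerivAt u hQd
  have hv2 := ((proj_hasFDerivAt u 0).smul
      (hasFDerivAt_const (EuclideanSpace.single (0 : Fin 3) (1:ℝ)) u)).add
    ((proj_hasFDerivAt u 1).smul (hasFDerivAt_const (EuclideanSpace.single (1 : Fin 3) (1:ℝ)) u))
  have hD := (hinvN.smul (hasFDerivAt_id u)).sub ((hinvQ.const_mul c).smul hv2)
  simp only [Function.comp_def, id_eq] at hD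
  have hD' : HasFDerivAt (Gfun c) _ u := hD
  rw [hD'.fderiv]
  have hs : Real.sqrt ((u 0)^2 + (u 1)^2) ≠ 0 := (Real.sqrt_pos.2 hq).ne'
  ext j
  fin_cases j <;>
  · simp only [h1, Real.sqrt_one, ContinuousLinearMap.sub_apply, ContinuousLinearMap.add_apply,
      ContinuousLinearMap.smul_apply, ContinuousLinearMap.smulRight_apply,
      ContinuousLinearMap.coe_smul', ContinuousLinearMap.id_apply,
      ContinuousLinearMap.zero_apply, Pi.smul_apply, proj_apply', smul_eq_mul,
      PiLp.sub_apply, PiLp.add_apply, PiLp.smul_apply, smul_zero, zero_add, add_zero,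
      EuclideanSpace.single_apply, Fin.isValue, Fin.reduceEq, if_true, if_false,
      pow_one, Nat.cast_ofNat, inv_one, one_mul, mul_one, mul_zero, zero_mul,
      reduceIte, ite_true, ite_false, Fin.zero_eta, Fin.mk_one, Fin.reduceFinMk,
      Pi.add_apply, Pi.sub_apply, Pi.inv_apply, Pi.smul_apply']
    generalize hgen : Real.sqrt ((u 0)^2 + (u 1)^2) = sq at hs ⊢
    field_simp
    ring

theorem stmt_17 (a : ℝ) (ha : 0 < a) (ha1 : a < 1)
    (H : EuclideanSpace ℝ (Fin 3) → ℝ)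
    (hH : H = fun v => ‖v‖ - Real.sqrt (1 - a ^ 2) * Real.sqrt ((v 0) ^ 2 + (v 1) ^ 2))
    (u : EuclideanSpace ℝ (Fin 3)) (hu : ‖u‖ = 1)
    (hu₁ : -a < u 2) (hu₂ : u 2 < a)
    (R : EuclideanSpace ℝ (Fin 3) →L[ℝ] EuclideanSpace ℝ (Fin 3))
    (hR : R = fderiv ℝ (gradient H) u) :
    R (vec3 0 0 1 - u 2 • u) = vec3 0 0 1 - u 2 • u ∧
    R (vec3 (u 1) (-(u 0)) 0) =
      (1 - Real.sqrt (1 - a ^ 2) / Real.sqrt (1 - (u 2) ^ 2)) • vec3 (u 1) (-(u 0)) 0 ∧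
    0 < 1 - Real.sqrt (1 - a ^ 2) / Real.sqrt (1 - (u 2) ^ 2) ∧
    1 - Real.sqrt (1 - a ^ 2) / Real.sqrt (1 - (u 2) ^ 2) < 1 := by
  have hc0 : (0:ℝ) < 1 - a ^ 2 := by nlinarith
  set c := Real.sqrt (1 - a ^ 2) with hc
  have hcpos : 0 < c := Real.sqrt_pos.2 hc0
  have hu2sq : (u 2) ^ 2 < a ^ 2 := sq_lt_sq' hu₁ hu₂
  have hq2 : 0 < 1 - (u 2) ^ 2 := by nlinarith
  have hNu : (u 0) ^ 2 + (u 1) ^ 2 + (u 2) ^ 2 = 1 := by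
    rw [EuclideanSpace.norm_eq] at hu
    have h' := Real.sqrt_eq_one.mp hu
    simpa [Fin.sum_univ_three, Real.norm_eq_abs, sq_abs] using h'
  have hQu : (u 0) ^ 2 + (u 1) ^ 2 = 1 - (u 2) ^ 2 := by linarith
  have hQpos : 0 < (u 0) ^ 2 + (u 1) ^ 2 := by rw [hQu]; exact hq2
  have hspos : 0 < Real.sqrt (1 - (u 2) ^ 2) := Real.sqrt_pos.2 hq2
  have hs2 : Real.sqrt (1 - (u 2) ^ 2) ^ 2 = 1 - (u 2) ^ 2 := Real.sq_sqrt hq2.le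
  have hcs : c < Real.sqrt (1 - (u 2) ^ 2) := Real.sqrt_lt_sqrt hc0.le (by nlinarith)
  have hinv : Real.sqrt (1 - (u 2) ^ 2) * (Real.sqrt (1 - (u 2) ^ 2))⁻¹ = 1 :=
    mul_inv_cancel₀ hspos.ne'
  -- continuity and openness
  have h0 : Continuous fun v : EuclideanSpace ℝ (Fin 3) => v 0 := by
    have e : ⇑(EuclideanSpace.proj (𝕜 := ℝ) (ι := Fin 3) 0)
        = fun w : EuclideanSpace ℝ (Fin 3) => w 0 := rfl
    rw [← e]; exact (EuclideanSpace.proj 0).continuous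
  have h1 : Continuous fun v : EuclideanSpace ℝ (Fin 3) => v 1 := by
    have e : ⇑(EuclideanSpace.proj (𝕜 := ℝ) (ι := Fin 3) 1)
        = fun w : EuclideanSpace ℝ (Fin 3) => w 1 := rfl
    rw [← e]; exact (EuclideanSpace.proj 1).continuous
  have hopen : IsOpen {v : EuclideanSpace ℝ (Fin 3) | 0 < (v 0) ^ 2 + (v 1) ^ 2} :=
    isOpen_lt continuous_const ((h0.pow 2).add (h1.pow 2))
  have hev : gradient H =ᶠ[nhds u] Gfun c :=
    Filter.eventuallyEq_of_mem (hopen.mem_nhds hQpos)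
      (fun v hv => by rw [hH]; exact gradient_eq_Gfun c v hv)
  have hR' : R = fderiv ℝ (Gfun c) u := by rw [hR, hev.fderiv_eq]
  refine ⟨?_, ?_, ?_, ?_⟩
  · rw [hR', fderiv_Gfun_apply c u hNu hQpos, hQu]
    ext j
    fin_cases j
    · simp only [vec3, PiLp.sub_apply, PiLp.add_apply, PiLp.smul_apply, smul_eq_mul,
        EuclideanSpace.single_apply, WithLp.equiv_symm_apply, PiLp.toLp_apply, Matrix.cons_val_zero,
        Matrix.cons_val_one, Matrix.head_cons, Matrix.cons_val_two, Matrix.tail_cons,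
        Fin.isValue, Fin.reduceEq, reduceIte, ite_true, ite_false, mul_one, mul_zero,
        Fin.mk_zero, Fin.mk_one, Fin.reduceFinMk,
        zero_mul, one_mul, add_zero, zero_add]
      linear_combination (u 2 * u 0 - c * u 2 * u 0 / Real.sqrt (1 - (u 2) ^ 2) ^ 3) * hQu +
        (c * u 2 * u 0 / Real.sqrt (1 - (u 2) ^ 2) ^ 3) * hs2 -
        (c * u 2 * u 0 * (Real.sqrt (1 - (u 2) ^ 2))⁻¹ *
          (1 + Real.sqrt (1 - (u 2) ^ 2) * (Real.sqrt (1 - (u 2) ^ 2))⁻¹)) * hinv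
    · simp only [vec3, PiLp.sub_apply, PiLp.add_apply, PiLp.smul_apply, smul_eq_mul,
        EuclideanSpace.single_apply, WithLp.equiv_symm_apply, PiLp.toLp_apply, Matrix.cons_val_zero,
        Matrix.cons_val_one, Matrix.head_cons, Matrix.cons_val_two, Matrix.tail_cons,
        Fin.isValue, Fin.reduceEq, reduceIte, ite_true, ite_false, mul_one, mul_zero,
        Fin.mk_zero, Fin.mk_one, Fin.reduceFinMk,
        zero_mul, one_mul, add_zero, zero_add]
      linear_combination (u 2 * u 1 - c * u 2 * u 1 / Real.sqrt (1 - (u 2) ^ 2) ^ 3) * hQu +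
        (c * u 2 * u 1 / Real.sqrt (1 - (u 2) ^ 2) ^ 3) * hs2 -
        (c * u 2 * u 1 * (Real.sqrt (1 - (u 2) ^ 2))⁻¹ *
          (1 + Real.sqrt (1 - (u 2) ^ 2) * (Real.sqrt (1 - (u 2) ^ 2))⁻¹)) * hinv
    · simp only [vec3, PiLp.sub_apply, PiLp.add_apply, PiLp.smul_apply, smul_eq_mul,
        EuclideanSpace.single_apply, WithLp.equiv_symm_apply, PiLp.toLp_apply, Matrix.cons_val_zero,
        Matrix.cons_val_one, Matrix.head_cons, Matrix.cons_val_two, Matrix.tail_cons,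
        Fin.isValue, Fin.reduceEq, reduceIte, ite_true, ite_false, mul_one, mul_zero,
        Fin.mk_zero, Fin.mk_one, Fin.reduceFinMk,
        zero_mul, one_mul, add_zero, zero_add]
      linear_combination (u 2 * u 2) * hQu
  · rw [hR', fderiv_Gfun_apply c u hNu hQpos, hQu]
    ext j
    fin_cases j <;>
    · simp only [vec3, PiLp.sub_apply, PiLp.add_apply, PiLp.smul_apply, smul_eq_mul,
        EuclideanSpace.single_apply, WithLp.equiv_symm_apply, PiLp.toLp_apply, Matrix.cons_val_zero,
        Matrix.cons_val_one, Matrix.head_cons, Matrix.cons_val_two, Matrix.tail_cons,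
        Fin.isValue, Fin.reduceEq, reduceIte, ite_true, ite_false, mul_one, mul_zero,
        Fin.mk_zero, Fin.mk_one, Fin.reduceFinMk,
        zero_mul, one_mul, add_zero, zero_add]
      ring
  · have : c / Real.sqrt (1 - (u 2) ^ 2) < 1 := (div_lt_one hspos).2 hcs
    linarith
  · have : 0 < c / Real.sqrt (1 - (u 2) ^ 2) := div_pos hcpos hspos
    linarith
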